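/- Let λ, μ be partitions of the same integer d. Then λ and μ have the same p-core if and only if for every residue i ∈ Z/pZ, the number of boxes of λ of content ≡ i (mod p) equals the number of boxes of μ of content ≡ i (mod p). -/

import Mathlib

namespace Stmt17

/-- Two cells of the `ℕ × ℕ` grid are adjacent (share an edge). -/
def Adj (c d : ℕ × ℕ) : Prop :=
  (c.1 = d.1 ∧ (c.2 = d.2 + 1 ∨ d.2 = c.2 + 1)) ∨
  (c.2 = d.2 ∧ (c.1 = d.1 + 1 ∨ d.1 = c.1 + 1))

/-- A finite set of cells is connected: any two of its cells are joined by a path of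
adjacent cells staying inside the set. -/
def Connected (D : Finset (ℕ × ℕ)) : Prop :=
  ∀ c ∈ D, ∀ d ∈ D, Relation.ReflTransGen (fun x y => x ∈ D ∧ y ∈ D ∧ Adj x y) c d

/-- `μ` is obtained from `λ` by removing a rim `p`-hook: `μ ⊆ λ`, the skew `λ \ μ` has
`p` cells, is connected, and lies along the rim (contains no 2×2 square). -/
def RimHook (p : ℕ) (lam mu : YoungDiagram) : Prop :=
  mu.cells ⊆ lam.cells ∧ (lam.cells \ mu.cells).card = p ∧
    Connected (lam.cells \ mu.cells) ∧
    ¬∃ a b : ℕ, (a, b) ∈ lam.cells \ mu.cells ∧ (a + 1, b) ∈ lam.cells \ mu.cells ∧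
      (a, b + 1) ∈ lam.cells \ mu.cells ∧ (a + 1, b + 1) ∈ lam.cells \ mu.cells

/-- `λ` is a `p`-core: no rim `p`-hook can be removed from it. -/
def IsCore (p : ℕ) (lam : YoungDiagram) : Prop := ¬∃ mu, RimHook p lam mu

/-- `m_i(λ)`: the number of boxes of `λ` (at position `(row k, col l)`) of content
`l − k ≡ i (mod p)`. -/
noncomputable def mBox (p : ℕ) (i : ZMod p) (lam : YoungDiagram) : ℕ :=
  (lam.cells.filter fun c => (((c.2 : ℤ) - (c.1 : ℤ) : ℤ) : ZMod p) = i).card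

/-- content of a cell -/
def cont (c : ℕ × ℕ) : ℤ := (c.2 : ℤ) - (c.1 : ℤ)

lemma adj_symm : Symmetric Adj := by
  intro c d h
  rcases h with ⟨h1, h2⟩ | ⟨h1, h2⟩
  · exact Or.inl ⟨h1.symm, h2.symm⟩
  · exact Or.inr ⟨h1.symm, h2.symm⟩

lemma adj_cont {c d : ℕ × ℕ} (h : Adj c d) : cont d = cont c + 1 ∨ cont d = cont c - 1 := by
  rcases h with ⟨h1, h2 | h2⟩ | ⟨h1, h2 | h2⟩ <;> simp only [cont] <;> omega

/-- a symmetric relation's refl-trans closure is symmetric -/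
lemma conn_symm {D : Finset (ℕ × ℕ)} :
    Symmetric (Relation.ReflTransGen (fun x y => x ∈ D ∧ y ∈ D ∧ Adj x y)) :=
  by haveI : Std.Symm (fun x y : ℕ × ℕ => x ∈ D ∧ y ∈ D ∧ Adj x y) :=
      ⟨fun _ _ h => ⟨h.2.1, h.1, adj_symm h.2.2⟩⟩
     exact fun a b h => Std.Symm.symm a b h

/-- contents are injective on the skew of a rim hook -/
lemma cont_injOn {lam mu : YoungDiagram}
    (h22 : ¬∃ a b : ℕ, (a, b) ∈ lam.cells \ mu.cells ∧ (a + 1, b) ∈ lam.cells \ mu.cells ∧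
      (a, b + 1) ∈ lam.cells \ mu.cells ∧ (a + 1, b + 1) ∈ lam.cells \ mu.cells) :
    ∀ c ∈ lam.cells \ mu.cells, ∀ d ∈ lam.cells \ mu.cells, cont c = cont d → c = d := by
  have key : ∀ c ∈ lam.cells \ mu.cells, ∀ d ∈ lam.cells \ mu.cells,
      cont c = cont d → c.1 < d.1 → False := by
    rintro ⟨a, b⟩ hc ⟨a', b'⟩ hd hcont hlt
    simp only [Finset.mem_sdiff, YoungDiagram.mem_cells] at hc hd
    have hb : b < b' := by simp only [cont] at hcont; omega
    apply h22
    refine ⟨a, b, ?_, ?_, ?_, ?_⟩ <;> simp only [Finset.mem_sdiff, YoungDiagram.mem_cells] <;>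
      constructor
    · exact hc.1
    · exact hc.2
    · exact lam.isLowerSet (by simp [Prod.le_def]; omega) hd.1
    · intro hm; exact hc.2 (mu.isLowerSet (by simp [Prod.le_def]) hm)
    · exact lam.isLowerSet (by simp [Prod.le_def]; omega) hd.1
    · intro hm; exact hc.2 (mu.isLowerSet (by simp [Prod.le_def]) hm)
    · exact lam.isLowerSet (by simp [Prod.le_def]; omega) hd.1
    · intro hm; exact hc.2 (mu.isLowerSet (by simp [Prod.le_def]) hm)
  intro c hc d hd hcont
  rcases lt_trichotomy c.1 d.1 with h | h | h
  · exact absurd (key c hc d hd hcont h) (by simp)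
  · have : c.2 = d.2 := by simp only [cont] at hcont; omega
    exact Prod.ext h this
  · exact absurd (key d hd c hc hcont.symm h) (by simp)

/-- discrete IVT along a path -/
lemma path_ivt {D : Finset (ℕ × ℕ)} {c d : ℕ × ℕ}
    (h : Relation.ReflTransGen (fun x y => x ∈ D ∧ y ∈ D ∧ Adj x y) c d) (hc : c ∈ D) :
    ∀ e : ℤ, cont c ≤ e → e ≤ cont d → e ∈ D.image cont := by
  induction h using Relation.ReflTransGen.head_induction_on with
  | refl => intro e h1 h2; have : e = cont d := le_antisymm h2 h1
            exact this ▸ Finset.mem_image_of_mem _ hc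
  | head hr hp ih =>
    intro e h1 h2
    rcases adj_cont hr.2.2 with hh | hh
    · rcases eq_or_lt_of_le h1 with rfl | hlt
      · exact Finset.mem_image_of_mem _ hr.1
      · exact ih hr.2.1 e (by omega) h2
    · exact ih hr.2.1 e (by omega) h2

/-- an interval of `p` consecutive integers contains exactly one element of each
residue class mod `p` -/
lemma icc_filter_card (p : ℕ) (hp : 0 < p) (m : ℤ) (i : ZMod p) :
    ((Finset.Icc m (m + p - 1)).filter (fun z : ℤ => (z : ZMod p) = i)).card = 1 := by
  haveI : NeZero p := ⟨hp.ne'⟩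
  rw [Finset.card_eq_one]
  refine ⟨m + ((i - (m : ZMod p)).val : ℤ), ?_⟩
  ext z
  simp only [Finset.mem_filter, Finset.mem_Icc, Finset.mem_singleton]
  constructor
  · rintro ⟨⟨hz1, hz2⟩, hz3⟩
    have hd : (p : ℤ) ∣ z - (m + ((i - (m : ZMod p)).val : ℤ)) := by
      rw [← ZMod.intCast_zmod_eq_zero_iff_dvd]
      push_cast
      rw [hz3, ZMod.natCast_val, ZMod.cast_id]
      ring
    have hb : ((i - (m : ZMod p)).val : ℤ) < p := by exact_mod_cast ZMod.val_lt _
    have hb2 : (0 : ℤ) ≤ ((i - (m : ZMod p)).val : ℤ) := by positivity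
    have := Int.eq_zero_of_abs_lt_dvd hd (by rw [abs_lt]; omega)
    omega
  · rintro rfl
    have hb : ((i - (m : ZMod p)).val : ℤ) < p := by exact_mod_cast ZMod.val_lt _
    have hb2 : (0 : ℤ) ≤ ((i - (m : ZMod p)).val : ℤ) := by positivity
    refine ⟨⟨by omega, by omega⟩, ?_⟩
    push_cast
    rw [ZMod.natCast_val, ZMod.cast_id]
    ring

/-- the skew of a rim hook contains exactly one cell of each content residue -/
lemma rimHook_skew_filter (p : ℕ) (hp : 0 < p) {lam mu : YoungDiagram}
    (h : RimHook p lam mu) (i : ZMod p) :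
    (((lam.cells \ mu.cells)).filter (fun c => ((cont c : ℤ) : ZMod p) = i)).card = 1 := by
  obtain ⟨hsub, hcard, hconn, h22⟩ := h
  set S := lam.cells \ mu.cells with hS
  have hinj := cont_injOn h22
  set T := S.image cont with hT
  have hTcard : T.card = p := by
    rw [hT, Finset.card_image_of_injOn (fun c hc d hd => hinj c hc d hd), hcard]
  have hne : S.Nonempty := by
    rw [← Finset.card_pos, hcard]; exact hp
  have hTne : T.Nonempty := hne.image _
  -- T is order-convex
  have hconv : ∀ a ∈ T, ∀ b ∈ T, ∀ e : ℤ, a ≤ e → e ≤ b → e ∈ T := by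
    intro a ha b hb e h1 h2
    obtain ⟨c, hc, rfl⟩ := Finset.mem_image.mp ha
    obtain ⟨d, hd, rfl⟩ := Finset.mem_image.mp hb
    exact path_ivt (hconn c hc d hd) hc e h1 h2
  -- hence T is an interval
  have hTicc : T = Finset.Icc (T.min' hTne) (T.min' hTne + p - 1) := by
    have hmax : T.max' hTne = T.min' hTne + p - 1 := by
      have hsub2 : Finset.Icc (T.min' hTne) (T.max' hTne) ⊆ T := fun e he => by
        rw [Finset.mem_Icc] at he
        exact hconv _ (T.min'_mem hTne) _ (T.max'_mem hTne) e he.1 he.2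
      have hsub1 : T ⊆ Finset.Icc (T.min' hTne) (T.max' hTne) := fun e he => by
        rw [Finset.mem_Icc]; exact ⟨T.min'_le e he, T.le_max' e he⟩
      have := Finset.Subset.antisymm hsub1 hsub2
      have hc2 : (Finset.Icc (T.min' hTne) (T.max' hTne)).card = p := by
        rw [← this, hTcard]
      rw [Int.card_Icc] at hc2
      have hmm : T.min' hTne ≤ T.max' hTne := Finset.min'_le _ _ (T.max'_mem hTne)
      omega
    rw [← hmax]
    apply Finset.Subset.antisymm
    · intro e he; rw [Finset.mem_Icc]; exact ⟨T.min'_le e he, T.le_max' e he⟩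
    · rw [hmax]
      intro e he; rw [Finset.mem_Icc] at he
      refine hconv _ (T.min'_mem hTne) _ ?_ e he.1 he.2
      rw [← hmax]; exact T.max'_mem hTne
  have key : (T.filter (fun z : ℤ => (z : ZMod p) = i)).card = 1 := by
    rw [hTicc]; exact icc_filter_card p hp _ i
  rw [← key]
  apply Finset.card_nbij (fun c => cont c)
  · intro c hc
    rw [Finset.mem_coe, Finset.mem_filter] at hc
    rw [Finset.mem_coe, Finset.mem_filter]
    exact ⟨Finset.mem_image_of_mem _ hc.1, hc.2⟩
  · intro c hc d hd hcd
    simp only [Finset.coe_filter, Set.mem_setOf_eq] at hc hd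
    exact hinj c hc.1 d hd.1 hcd
  · intro z hz
    simp only [Finset.coe_filter, Set.mem_setOf_eq] at hz
    obtain ⟨c, hc, rfl⟩ := Finset.mem_image.mp hz.1
    exact ⟨c, by simp only [Finset.coe_filter, Set.mem_setOf_eq]; exact ⟨hc, hz.2⟩, rfl⟩

lemma rimHook_mBox (p : ℕ) (hp : 0 < p) {lam mu : YoungDiagram}
    (h : RimHook p lam mu) (i : ZMod p) : mBox p i lam = mBox p i mu + 1 := by
  have hsub := h.1
  have hsk := rimHook_skew_filter p hp h i
  unfold mBox
  have hdecomp : lam.cells = mu.cells ∪ (lam.cells \ mu.cells) :=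
    (Finset.union_sdiff_of_subset hsub).symm
  rw [hdecomp, Finset.filter_union, Finset.card_union_of_disjoint
    (Finset.disjoint_filter_filter (Finset.disjoint_sdiff))]
  simp only [cont] at hsk
  exact congrArg (HAdd.hAdd _) hsk

lemma rimHook_card (p : ℕ) {lam mu : YoungDiagram} (h : RimHook p lam mu) :
    lam.cells.card = mu.cells.card + p := by
  have := Finset.card_sdiff_add_card_eq_card h.1
  have h2 := h.2.1
  omega

lemma exists_core (p : ℕ) (hp : 0 < p) (lam : YoungDiagram) :
    ∃ nu, IsCore p nu ∧ Relation.ReflTransGen (RimHook p) lam nu := by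
  by_cases h : IsCore p lam
  · exact ⟨lam, h, Relation.ReflTransGen.refl⟩
  · rw [IsCore, not_not] at h
    obtain ⟨mu, hmu⟩ := h
    have hcard : mu.cells.card < lam.cells.card := by
      have := rimHook_card p hmu; omega
    obtain ⟨nu, hnu1, hnu2⟩ := exists_core p hp mu
    exact ⟨nu, hnu1, hnu2.head hmu⟩
termination_by lam.cells.card

lemma rtg_mBox (p : ℕ) (hp : 0 < p) {lam nu : YoungDiagram}
    (h : Relation.ReflTransGen (RimHook p) lam nu) :
    ∃ n, lam.cells.card = nu.cells.card + n * p ∧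
      ∀ i, mBox p i lam = mBox p i nu + n := by
  induction h using Relation.ReflTransGen.head_induction_on with
  | refl => exact ⟨0, by simp⟩
  | head hr hpth ih =>
    obtain ⟨n, hc, hm⟩ := ih
    refine ⟨n + 1, ?_, fun i => ?_⟩
    · have := rimHook_card p hr; rw [this, hc]; ring
    · rw [rimHook_mBox p hp hr i, hm i]; ring
/-- beta numbers: first-column hook lengths, padded to `N` rows -/
def bbeta (lam : YoungDiagram) (N k : ℕ) : ℕ := lam.rowLen k + (N - 1 - k)

lemma rowLen_eq_zero' (lam : YoungDiagram) {j : ℕ} (h : lam.colLen 0 ≤ j) :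
    lam.rowLen j = 0 := by
  by_contra hne
  have h0 : (j, 0) ∈ lam := YoungDiagram.mem_iff_lt_rowLen.mpr (by omega)
  have := YoungDiagram.mem_iff_lt_colLen.mp h0
  omega

lemma bbeta_strictAnti (lam : YoungDiagram) (N : ℕ) {k k' : ℕ} (h : k < k') (h' : k' < N) :
    bbeta lam N k' < bbeta lam N k := by
  have := lam.rowLen_anti k k' h.le
  unfold bbeta
  omega

/-- If some bead can be moved down `p` positions into an empty slot, then a rim `p`-hook
can be removed. -/
lemma not_core_of_gap (p : ℕ) (hp : 0 < p) (lam : YoungDiagram) (N : ℕ)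
    (hN : lam.colLen 0 < N) (k : ℕ) (hk : k < N)
    (hbp : p ≤ bbeta lam N k)
    (hgap : ∀ k' < N, bbeta lam N k' ≠ bbeta lam N k - p) :
    ∃ mu, RimHook p lam mu := by
  classical
  obtain ⟨y, hy⟩ : ∃ y, y = bbeta lam N k - p := ⟨_, rfl⟩
  have hgap' : ∀ k' < N, bbeta lam N k' ≠ y := by rw [hy]; exact hgap
  have hβlast0 : lam.rowLen (N - 1) = 0 := rowLen_eq_zero' lam (by omega)
  have hβlast : bbeta lam N (N - 1) = 0 := by unfold bbeta; rw [hβlast0]; omega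
  have hy0 : 0 < y := by
    rcases Nat.eq_zero_or_pos y with h0 | h0
    · exact absurd (hβlast.trans h0.symm) (hgap' (N - 1) (by omega))
    · exact h0
  have hylt : y < bbeta lam N k := by omega
  have hQex : ∃ j, bbeta lam N (k + j) ≤ y := by
    refine ⟨N - 1 - k, ?_⟩
    have he : k + (N - 1 - k) = N - 1 := by omega
    rw [he, hβlast]; omega
  obtain ⟨j₀, hj₀, hj₀min⟩ : ∃ j₀, bbeta lam N (k + j₀) ≤ y ∧
      ∀ j < j₀, y < bbeta lam N (k + j) :=
    ⟨Nat.find hQex, Nat.find_spec hQex, fun j hj => Nat.lt_of_not_le (Nat.find_min hQex hj)⟩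
  have hj₀pos : 0 < j₀ := by
    rcases Nat.eq_zero_or_pos j₀ with rfl | h0
    · rw [Nat.add_zero] at hj₀; omega
    · exact h0
  have hj₀le : j₀ ≤ N - 1 - k := by
    by_contra hcon
    have h1 := hj₀min (N - 1 - k) (by omega)
    have he : k + (N - 1 - k) = N - 1 := by omega
    rw [he, hβlast] at h1; omega
  obtain ⟨m, hm⟩ : ∃ m, m + 1 = k + j₀ := ⟨k + j₀ - 1, by omega⟩
  have hkm : k ≤ m := by omega
  have hmN : m + 1 < N := by omega
  have hymb : y < bbeta lam N m := by
    have h1 := hj₀min (j₀ - 1) (by omega)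
    have he : k + (j₀ - 1) = m := by omega
    rwa [he] at h1
  have hym1b : bbeta lam N (m + 1) < y := by
    rw [← hm] at hj₀
    rcases Nat.lt_or_ge (bbeta lam N (m + 1)) y with h | h
    · exact h
    · exact absurd (le_antisymm hj₀ h) (hgap' (m + 1) (by omega))
  -- pure arithmetic versions
  have hym : y < lam.rowLen m + (N - 1 - m) := hymb
  have hym1 : lam.rowLen (m + 1) + (N - 1 - (m + 1)) < y := hym1b
  have hbk : y + p = lam.rowLen k + (N - 1 - k) := by
    have : bbeta lam N k = lam.rowLen k + (N - 1 - k) := rfl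
    omega
  -- rows k..m are nonempty
  have hrpos : ∀ j, k ≤ j → j ≤ m → 1 ≤ lam.rowLen j := by
    intro j hj1 hj2
    by_contra hcon
    have hrm : lam.rowLen m = 0 := by
      have := lam.rowLen_anti j m hj2; omega
    have hrm1 : lam.rowLen (m + 1) = 0 := by
      have := lam.rowLen_anti j (m + 1) (by omega); omega
    rw [hrm] at hym; rw [hrm1] at hym1
    omega
  have hsmy : N - 1 - m ≤ y := by omega
  -- the new row lengths
  set s : ℕ → ℕ := fun i =>
    if i < k then lam.rowLen i else if i < m then lam.rowLen (i + 1) - 1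
      else if i = m then y - (N - 1 - m) else lam.rowLen i with hs
  have hs_lt : ∀ i, i < k → s i = lam.rowLen i := by intro i h; simp only [hs, if_pos h]
  have hs_mid : ∀ i, k ≤ i → i < m → s i = lam.rowLen (i + 1) - 1 := by
    intro i h1 h2; simp only [hs]; rw [if_neg (by omega), if_pos h2]
  have hs_m : s m = y - (N - 1 - m) := by
    simp only [hs]; rw [if_neg (by omega), if_neg (by omega)]; simp
  have hs_gt : ∀ i, m < i → s i = lam.rowLen i := by
    intro i h; simp only [hs]; rw [if_neg (by omega), if_neg (by omega), if_neg (by omega)]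
  have hsle : ∀ i, s i ≤ lam.rowLen i := by
    intro i
    rcases Nat.lt_or_ge i k with h | h
    · rw [hs_lt i h]
    rcases Nat.lt_or_ge i m with h2 | h2
    · rw [hs_mid i h h2]
      have := lam.rowLen_anti i (i + 1) (by omega); omega
    rcases Nat.eq_or_lt_of_le h2 with h3 | h3
    · have e1 : s i = y - (N - 1 - m) := by rw [show i = m by omega]; exact hs_m
      have e2 := lam.rowLen_anti i m (by omega)
      omega
    · rw [hs_gt i h3]
  have hstrip : ∀ i, k ≤ i → i ≤ m → s i < lam.rowLen i := by
    intro i h1 h2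
    rcases Nat.lt_or_ge i m with h3 | h3
    · rw [hs_mid i h1 h3]
      have h4 := hrpos (i + 1) (by omega) (by omega)
      have := lam.rowLen_anti i (i + 1) (by omega); omega
    · have h4 : i = m := by omega
      subst h4
      rw [hs_m]
      have := hrpos i h1 le_rfl
      omega
  have hsmono : ∀ i, s (i + 1) ≤ s i := by
    intro i
    have hra := lam.rowLen_anti i (i + 1) (by omega : i ≤ i + 1)
    have hrb := lam.rowLen_anti (i + 1) (i + 1 + 1) (by omega : i + 1 ≤ i + 1 + 1)
    rcases Nat.lt_or_ge (i + 1) k with h1 | h1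
    · rw [hs_lt _ h1, hs_lt _ (by omega)]; exact hra
    rcases Nat.lt_or_ge i k with h2 | h2
    · rw [hs_lt _ h2]
      rcases Nat.lt_or_ge (i + 1) m with h3 | h3
      · rw [hs_mid _ (by omega) h3]
        omega
      · have e1 : s (i + 1) = y - (N - 1 - m) := by
          rw [show i + 1 = m by omega]; exact hs_m
        have e2 := lam.rowLen_anti (i + 1) m (by omega)
        omega
    rcases Nat.lt_or_ge (i + 1) m with h3 | h3
    · rw [hs_mid _ (by omega) h3, hs_mid _ h2 (by omega)]
      omega
    rcases Nat.eq_or_lt_of_le h3 with h4 | h4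
    · -- m = i + 1
      have e1 : s (i + 1) = y - (N - 1 - m) := by
        rw [show i + 1 = m by omega]; exact hs_m
      have e2 : s i = lam.rowLen (i + 1) - 1 := hs_mid _ h2 (by omega)
      have e3 := hrpos (i + 1) (by omega) (by omega)
      have e4 : y < lam.rowLen (i + 1) + (N - 1 - m) := by
        rw [show i + 1 = m by omega]; exact hym
      omega
    rcases Nat.eq_or_lt_of_le h4 with h5 | h5
    · -- m = i
      have e1 : s (i + 1) = lam.rowLen (i + 1) := hs_gt _ (by omega)
      have e2 : s i = y - (N - 1 - m) := by rw [show i = m by omega]; exact hs_m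
      have e3 : lam.rowLen (i + 1) + (N - 1 - (i + 1)) < y := by
        rw [show i + 1 = m + 1 by omega]; exact hym1
      omega
    · rw [hs_gt _ (by omega), hs_gt _ (by omega)]; exact hra
  have santi : Antitone s := antitone_nat_of_succ_le hsmono
  -- the new diagram
  have hlow : IsLowerSet (↑(lam.cells.filter (fun c => c.2 < s c.1)) : Set (ℕ × ℕ)) := by
    intro c c' hle hc
    simp only [Finset.coe_filter, Set.mem_setOf_eq, Finset.mem_coe] at hc ⊢
    refine ⟨lam.isLowerSet hle hc.1, ?_⟩
    have h1 : c'.1 ≤ c.1 := hle.1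
    have h2 : c'.2 ≤ c.2 := hle.2
    have h3 := santi h1
    have h4 := hc.2
    omega
  set mu : YoungDiagram := ⟨lam.cells.filter (fun c => c.2 < s c.1), hlow⟩ with hmu
  have hmucells : mu.cells = lam.cells.filter (fun c => c.2 < s c.1) := rfl
  have hmem_skew : ∀ a b : ℕ, ((a, b) ∈ lam.cells \ mu.cells) ↔ (s a ≤ b ∧ b < lam.rowLen a) := by
    intro a b
    rw [Finset.mem_sdiff, hmucells, Finset.mem_filter]
    dsimp only
    rw [YoungDiagram.mem_cells, YoungDiagram.mem_iff_lt_rowLen]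
    constructor
    · rintro ⟨h1, h2⟩
      constructor
      · by_contra hcon
        exact h2 ⟨h1, by omega⟩
      · exact h1
    · rintro ⟨h1, h2⟩
      exact ⟨h2, by rintro ⟨-, h3⟩; omega⟩
  have hrow_range : ∀ a b : ℕ, (a, b) ∈ lam.cells \ mu.cells → k ≤ a ∧ a ≤ m := by
    intro a b hab
    rw [hmem_skew] at hab
    by_contra hcon
    have : s a = lam.rowLen a := by
      rcases Nat.lt_or_ge a k with h | h
      · exact hs_lt a h
      · exact hs_gt a (by omega)
    omega
  refine ⟨mu, ?_, ?_, ?_, ?_⟩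
  · rw [hmucells]; exact Finset.filter_subset _ _
  · -- cardinality
    have hdecomp : lam.cells \ mu.cells =
        (Finset.Icc k m).biUnion
          (fun i => (Finset.Ico (s i) (lam.rowLen i)).image (fun j => (i, j))) := by
      ext c
      obtain ⟨a, b⟩ := c
      simp only [Finset.mem_biUnion, Finset.mem_Icc, Finset.mem_Ico, Finset.mem_image,
        Prod.mk.injEq]
      constructor
      · intro h
        have h2 := hrow_range a b h
        rw [hmem_skew] at h
        exact ⟨a, h2, b, h, rfl, rfl⟩
      · rintro ⟨i, hi, j, hj, rfl, rfl⟩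
        rw [hmem_skew]; exact hj
    rw [hdecomp, Finset.card_biUnion]
    · have hterm : ∀ i ∈ Finset.Icc k m,
          ((Finset.Ico (s i) (lam.rowLen i)).image (fun j => (i, j))).card
            = lam.rowLen i - s i := by
        intro i _
        rw [Finset.card_image_of_injective _ (fun a b hab => by
          simpa using hab), Nat.card_Ico]
      rw [Finset.sum_congr rfl hterm]
      have key : ∀ n j, k ≤ j → j + n = m →
          (∑ i ∈ Finset.Icc j m, (lam.rowLen i - s i)) + y
            = lam.rowLen j + (N - 1 - j) := by
        intro n
        induction n with
        | zero =>
          intro j hj1 hj2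
          have he : j = m := by omega
          subst he
          rw [Finset.Icc_self, Finset.sum_singleton, hs_m]
          have := hrpos j hj1 le_rfl
          omega
        | succ n ih =>
          intro j hj1 hj2
          have hjm : j < m := by omega
          have hIcc : Finset.Icc j m = insert j (Finset.Icc (j + 1) m) := by
            ext x
            simp only [Finset.mem_Icc, Finset.mem_insert]
            omega
          rw [hIcc, Finset.sum_insert (by simp only [Finset.mem_Icc]; omega)]
          have ihh := ih (j + 1) (by omega) (by omega)
          rw [hs_mid j hj1 hjm]
          have h1 := hrpos (j + 1) (by omega) (by omega)
          have h2 := lam.rowLen_anti j (j + 1) (by omega)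
          omega
      have hkey := key (m - k) k le_rfl (by omega)
      omega
    · intro i hi j hj hij
      simp only [Finset.disjoint_left, Finset.mem_image]
      rintro c ⟨a, ha, rfl⟩ ⟨b, hb, hcb⟩
      injection hcb with hc1 hc2
      exact hij hc1.symm
  · -- connectivity
    intro c hc d hd
    set D := lam.cells \ mu.cells with hD
    set rel : ℕ × ℕ → ℕ × ℕ → Prop := (fun x y => x ∈ D ∧ y ∈ D ∧ Adj x y) with hrel
    have hhor : ∀ n a b, (a, b) ∈ D → (a, b + n) ∈ D →
        Relation.ReflTransGen rel (a, b) (a, b + n) := by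
      intro n
      induction n with
      | zero => intro a b _ _; exact Relation.ReflTransGen.refl
      | succ n ih =>
        intro a b hb hb'
        have hmem : (a, b + n) ∈ D := by
          rw [hmem_skew] at hb hb' ⊢
          omega
        have step : rel (a, b + n) (a, b + (n + 1)) :=
          ⟨hmem, hb', Or.inl ⟨rfl, Or.inr (by omega)⟩⟩
        exact (ih a b hb hmem).tail step
    have hhor' : ∀ a b b', (a, b) ∈ D → (a, b') ∈ D →
        Relation.ReflTransGen rel (a, b) (a, b') := by
      intro a b b' hb hb'
      rcases Nat.le_or_le b b' with h | h
      · obtain ⟨n, rfl⟩ : ∃ n, b' = b + n := ⟨b' - b, by omega⟩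
        exact hhor n a b hb hb'
      · obtain ⟨n, rfl⟩ : ∃ n, b = b' + n := ⟨b - b', by omega⟩
        exact conn_symm (hhor n a b' hb' hb)
    have hsmD : (m, s m) ∈ D := by
      rw [hmem_skew]; exact ⟨le_rfl, hstrip m hkm le_rfl⟩
    have hspine : ∀ n a b, a + n = m → (a, b) ∈ D →
        Relation.ReflTransGen rel (a, b) (m, s m) := by
      intro n
      induction n with
      | zero =>
        intro a b ha hab
        have he : a = m := by omega
        subst he
        exact hhor' a b (s a) hab hsmD
      | succ n ih =>
        intro a b ha hab
        have ham : a < m := by omega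
        have hak : k ≤ a := (hrow_range a b hab).1
        have hsa : s a = lam.rowLen (a + 1) - 1 := hs_mid a hak ham
        have hmem1 : (a, s a) ∈ D := by
          rw [hmem_skew]; exact ⟨le_rfl, hstrip a hak (by omega)⟩
        have hr1 := hrpos (a + 1) (by omega) (by omega)
        have hstrip1 := hstrip (a + 1) (by omega) (by omega)
        have hmem2 : (a + 1, s a) ∈ D := by
          rw [hmem_skew]
          omega
        have step : rel (a, s a) (a + 1, s a) := ⟨hmem1, hmem2, Or.inr ⟨rfl, Or.inr rfl⟩⟩
        exact ((hhor' a b (s a) hab hmem1).tail step).trans (ih (a + 1) (s a) (by omega) hmem2)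
    obtain ⟨a, b⟩ := c
    obtain ⟨a', b'⟩ := d
    have hra := hrow_range a b hc
    have hrb := hrow_range a' b' hd
    have h1 := hspine (m - a) a b (by omega) hc
    have h2 := hspine (m - a') a' b' (by omega) hd
    exact h1.trans (conn_symm h2)
  · -- no 2x2 square
    rintro ⟨a, b, h1, h2, h3, h4⟩
    have hr1 := hrow_range a b h1
    have hr2 := hrow_range (a + 1) b h2
    rw [hmem_skew] at h1 h2 h3 h4
    have ham : a < m := by omega
    have hsa : s a = lam.rowLen (a + 1) - 1 := hs_mid a (by omega) ham
    have := hrpos (a + 1) (by omega) (by omega)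
    omega
/-- number of `y < x` with `y ≡ j (mod p)` -/
noncomputable def G (p : ℕ) (j : ZMod p) (x : ℕ) : ℕ :=
  ((Finset.range x).filter (fun y : ℕ => (y : ZMod p) = j)).card

lemma ico_filter_card_nat (p : ℕ) (hp : 0 < p) (a : ℕ) (j : ZMod p) :
    ((Finset.Ico a (a + p)).filter (fun y : ℕ => (y : ZMod p) = j)).card = 1 := by
  haveI : NeZero p := ⟨hp.ne'⟩
  rw [Finset.card_eq_one]
  refine ⟨a + (j - (a : ZMod p)).val, ?_⟩
  ext z
  simp only [Finset.mem_filter, Finset.mem_Ico, Finset.mem_singleton]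
  have hb : (j - (a : ZMod p)).val < p := ZMod.val_lt _
  constructor
  · rintro ⟨⟨hz1, hz2⟩, hz3⟩
    have hzz : ((z - a : ℕ) : ZMod p) = ((j - (a : ZMod p)).val : ZMod p) := by
      rw [Nat.cast_sub hz1, hz3, ZMod.natCast_val, ZMod.cast_id]
    rw [ZMod.natCast_eq_natCast_iff'] at hzz
    rw [Nat.mod_eq_of_lt (by omega), Nat.mod_eq_of_lt hb] at hzz
    omega
  · rintro rfl
    refine ⟨⟨by omega, by omega⟩, ?_⟩
    push_cast
    rw [ZMod.natCast_val, ZMod.cast_id]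
    ring
lemma G_step (p : ℕ) (hp : 0 < p) (j : ZMod p) (x : ℕ) : G p j (x + p) = G p j x + 1 := by
  unfold G
  rw [Finset.range_eq_Ico, ← Finset.Ico_union_Ico_eq_Ico (Nat.zero_le x) (by omega : x ≤ x + p),
    Finset.filter_union, Finset.card_union_of_disjoint]
  · rw [← Finset.range_eq_Ico, ico_filter_card_nat p hp x j]
  · exact Finset.disjoint_filter_filter (by
      simp only [Finset.disjoint_left, Finset.mem_Ico]
      intro y h1 h2
      omega)

lemma G_split (p : ℕ) (hp : 0 < p) (j : ZMod p) (a b : ℕ) :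
    G p j (b + a) = G p j a
      + ((Finset.Ico a (b + a)).filter (fun y : ℕ => (y : ZMod p) = j)).card := by
  unfold G
  rw [Finset.range_eq_Ico, Finset.range_eq_Ico,
    ← Finset.Ico_union_Ico_eq_Ico (Nat.zero_le a) (by omega : a ≤ b + a),
    Finset.filter_union, Finset.card_union_of_disjoint]
  exact Finset.disjoint_filter_filter (by
    simp only [Finset.disjoint_left, Finset.mem_Ico]
    intro y h1 h2
    omega)

lemma G_base (p : ℕ) (hp : 0 < p) (j : ZMod p) (r : ℕ) (hr : r < p) :
    G p j r = if j.val < r then 1 else 0 := by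
  haveI : NeZero p := ⟨hp.ne'⟩
  unfold G
  have hfe : (Finset.range r).filter (fun y : ℕ => (y : ZMod p) = j)
      = (Finset.range r).filter (fun y : ℕ => y = j.val) := by
    apply Finset.filter_congr
    intro y hy
    rw [Finset.mem_range] at hy
    constructor
    · intro h; rw [← h, ZMod.val_cast_of_lt (by omega)]
    · intro h; rw [h, ZMod.natCast_val, ZMod.cast_id]
  rw [hfe, Finset.filter_eq', apply_ite Finset.card, Finset.card_singleton,
    Finset.card_empty]
  simp [Finset.mem_range]

lemma G_val (p : ℕ) (hp : 0 < p) (j : ZMod p) (r : ℕ) (hr : r < p) (t : ℕ) :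
    G p j (r + t * p) = t + if j.val < r then 1 else 0 := by
  induction t with
  | zero => simp only [Nat.zero_mul, Nat.add_zero, Nat.zero_add]; exact G_base p hp j r hr
  | succ t ih =>
    have he : r + (t + 1) * p = (r + t * p) + p := by ring
    rw [he, G_step p hp j _, ih]
    omega

/-- the row decomposition of the cells of a Young diagram -/
lemma cells_decomp (lam : YoungDiagram) (N : ℕ) (hN : lam.colLen 0 < N) :
    lam.cells = (Finset.range N).biUnion
      (fun k => (Finset.range (lam.rowLen k)).image (fun l => (k, l))) := by
  ext c
  obtain ⟨a, b⟩ := c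
  simp only [Finset.mem_biUnion, Finset.mem_range, Finset.mem_image, Prod.mk.injEq]
  constructor
  · intro h
    rw [YoungDiagram.mem_cells, YoungDiagram.mem_iff_lt_rowLen] at h
    have ha : a < N := by
      by_contra hcon
      rw [rowLen_eq_zero' lam (by omega)] at h
      omega
    exact ⟨a, ha, b, h, rfl, rfl⟩
  · rintro ⟨k, hk, l, hl, rfl, rfl⟩
    rw [YoungDiagram.mem_cells, YoungDiagram.mem_iff_lt_rowLen]
    exact hl

/-- the content-count formula in terms of beta numbers -/
lemma mBox_formula (p : ℕ) (hp : 0 < p) (lam : YoungDiagram) (N : ℕ)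
    (hN : lam.colLen 0 < N) (i : ZMod p) :
    mBox p i lam + ∑ k ∈ Finset.range N, G p (i + ((N - 1 : ℕ) : ZMod p)) (N - 1 - k)
      = ∑ k ∈ Finset.range N, G p (i + ((N - 1 : ℕ) : ZMod p)) (bbeta lam N k) := by
  set j := i + ((N - 1 : ℕ) : ZMod p) with hj
  -- row-by-row count
  have hrow : ∀ k, k < N →
      ((Finset.range (lam.rowLen k)).filter
          (fun l : ℕ => (((l : ℤ) - (k : ℤ) : ℤ) : ZMod p) = i)).card
        + G p j (N - 1 - k) = G p j (bbeta lam N k) := by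
    intro k hk
    have hcount : ((Finset.range (lam.rowLen k)).filter
          (fun l : ℕ => (((l : ℤ) - (k : ℤ) : ℤ) : ZMod p) = i)).card
        = ((Finset.Ico (N - 1 - k) (lam.rowLen k + (N - 1 - k))).filter
          (fun y : ℕ => (y : ZMod p) = j)).card := by
      apply Finset.card_nbij (fun l => l + (N - 1 - k))
      · intro l hl
        simp only [Finset.mem_coe, Finset.mem_filter, Finset.mem_range, Finset.mem_Ico] at hl ⊢
        refine ⟨⟨by omega, by omega⟩, ?_⟩
        have hcast : ((l + (N - 1 - k) : ℕ) : ZMod p)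
            = (((l : ℤ) - (k : ℤ) : ℤ) : ZMod p) + ((N - 1 : ℕ) : ZMod p) := by
          have h1 : (N - 1 - k : ℕ) + k = (N - 1 : ℕ) := by omega
          have h2 := congrArg (fun t : ℕ => (t : ZMod p)) h1
          push_cast at h2
          push_cast
          linear_combination h2
        rw [hcast, hl.2, hj]
      · intro x hx y hy hxy
        dsimp only at hxy
        omega
      · intro z hz
        simp only [Finset.coe_filter, Finset.mem_Ico, Set.mem_setOf_eq] at hz
        obtain ⟨⟨hz1, hz1'⟩, hz2⟩ := hz
        refine ⟨z - (N - 1 - k), ?_, by dsimp only; omega⟩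
        simp only [Finset.coe_filter, Finset.mem_range, Set.mem_setOf_eq]
        refine ⟨by omega, ?_⟩
        have h1 : (z - (N - 1 - k) : ℕ) + (N - 1 : ℕ) = z + k := by omega
        have h2 := congrArg (fun t : ℕ => (t : ZMod p)) h1
        push_cast at h2
        rw [hj] at hz2
        push_cast
        linear_combination h2 + hz2
    rw [hcount]
    unfold bbeta
    rw [G_split p hp j (N - 1 - k) (lam.rowLen k)]
    ring
  -- decompose mBox by rows
  have hdec : mBox p i lam = ∑ k ∈ Finset.range N,
      ((Finset.range (lam.rowLen k)).filter
          (fun l : ℕ => (((l : ℤ) - (k : ℤ) : ℤ) : ZMod p) = i)).card := by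
    unfold mBox
    rw [cells_decomp lam N hN, Finset.filter_biUnion, Finset.card_biUnion]
    · apply Finset.sum_congr rfl
      intro k hk
      rw [Finset.filter_image]
      rw [Finset.card_image_of_injective _ (fun a b hab => by simpa using hab)]
    · intro x hx y hy hxy
      apply Finset.disjoint_filter_filter
      simp only [Finset.disjoint_left, Finset.mem_image]
      rintro c ⟨a, ha, rfl⟩ ⟨b, hb, hcb⟩
      injection hcb with hc1 hc2
      exact hxy hc1.symm
  rw [hdec, ← Finset.sum_add_distrib]
  exact Finset.sum_congr rfl (fun k hk => hrow k (Finset.mem_range.mp hk))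
lemma downclosed_eq_range (S : Finset ℕ) (h : ∀ x, x + 1 ∈ S → x ∈ S) :
    S = Finset.range S.card := by
  have hstep : ∀ d x, x + d ∈ S → x ∈ S := by
    intro d
    induction d with
    | zero => intro x hx; simpa using hx
    | succ d ih =>
      intro x hx
      have hx2 : (x + 1) + d ∈ S := by rwa [show (x + 1) + d = x + (d + 1) by omega]
      exact h x (ih (x + 1) hx2)
  have hiff : ∀ x, x ∈ S ↔ x < S.card := by
    intro x
    constructor
    · intro hx
      have hsub : Finset.range (x + 1) ⊆ S := by
        intro t ht
        rw [Finset.mem_range] at ht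
        exact hstep (x - t) t (by rwa [show t + (x - t) = x by omega])
      have := Finset.card_le_card hsub
      rw [Finset.card_range] at this
      omega
    · intro hx
      by_contra hcon
      have hsub : S ⊆ Finset.range x := by
        intro z hz
        rw [Finset.mem_range]
        by_contra hzx
        exact hcon (hstep (z - x) x (by rwa [show x + (z - x) = z by omega]))
      have := Finset.card_le_card hsub
      rw [Finset.card_range] at this
      omega
  ext x
  rw [Finset.mem_range]
  exact hiff x

lemma runner_eq (p : ℕ) (hp : 0 < p) (B : Finset ℕ)
    (hdc : ∀ x ∈ B, p ≤ x → x - p ∈ B) (r : ℕ) (hr : r < p) :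
    B.filter (fun x => x % p = r)
      = (Finset.range ((B.filter (fun x => x % p = r)).card)).image
          (fun s => r + s * p) := by
  classical
  obtain ⟨F, hF⟩ : ∃ F, F = B.filter (fun x => x % p = r) := ⟨_, rfl⟩
  rw [← hF]
  obtain ⟨S, hS⟩ : ∃ S, S = F.image (fun x => (x - r) / p) := ⟨_, rfl⟩
  have hdiv : ∀ x ∈ F, x = r + ((x - r) / p) * p := by
    intro x hx
    rw [hF, Finset.mem_filter] at hx
    have h1 : x % p = r := hx.2
    have h4 : r ≤ x := by have := Nat.mod_le x p; omega
    have h3 := Nat.div_add_mod x p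
    have h5 : x - r = p * (x / p) := by omega
    have h6 : (x - r) / p = x / p := by rw [h5, Nat.mul_div_cancel_left _ hp]
    rw [h6, mul_comm, ← h1]
    exact (Nat.mod_add_div x p).symm
  have hmemS : ∀ t, t ∈ S ↔ r + t * p ∈ B := by
    intro t
    rw [hS, Finset.mem_image]
    constructor
    · rintro ⟨x, hx, rfl⟩
      have h2 := hdiv x hx
      rw [hF, Finset.mem_filter] at hx
      rw [← h2]
      exact hx.1
    · intro ht
      refine ⟨r + t * p, ?_, ?_⟩
      · rw [hF, Finset.mem_filter]
        refine ⟨ht, ?_⟩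
        rw [Nat.add_mul_mod_self_right, Nat.mod_eq_of_lt hr]
      · rw [show r + t * p - r = t * p by omega, Nat.mul_div_cancel _ hp]
  have hSdc : ∀ t, t + 1 ∈ S → t ∈ S := by
    intro t ht
    rw [hmemS] at ht ⊢
    have := hdc _ ht (by nlinarith)
    rwa [show r + (t + 1) * p - p = r + t * p by ring_nf; omega] at this
  have hSrange : S = Finset.range S.card := downclosed_eq_range S hSdc
  have hfinj : Function.Injective (fun s : ℕ => r + s * p) := by
    intro s1 s2 h12
    dsimp only at h12
    have : s1 * p = s2 * p := by omega
    exact Nat.eq_of_mul_eq_mul_right hp this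
  have hFS : F = S.image (fun s => r + s * p) := by
    ext x
    rw [Finset.mem_image]
    constructor
    · intro hx
      refine ⟨(x - r) / p, ?_, (hdiv x hx).symm⟩
      rw [hS]
      exact Finset.mem_image_of_mem _ hx
    · rintro ⟨t, ht, rfl⟩
      rw [hmemS] at ht
      rw [hF, Finset.mem_filter]
      refine ⟨ht, ?_⟩
      rw [Nat.add_mul_mod_self_right, Nat.mod_eq_of_lt hr]
  have hcard : F.card = S.card := by
    rw [hFS, Finset.card_image_of_injective _ hfinj]
  rw [hcard, hFS, ← hSrange]

lemma core_sum (p : ℕ) (hp : 0 < p) (B : Finset ℕ)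
    (hdc : ∀ x ∈ B, p ≤ x → x - p ∈ B) (j : ZMod p) :
    ∑ x ∈ B, G p j x
      = (∑ r ∈ Finset.range p,
            ∑ t ∈ Finset.range ((B.filter (fun x => x % p = r)).card), t)
        + ∑ r ∈ Finset.Ico (j.val + 1) p, (B.filter (fun x => x % p = r)).card := by
  classical
  have hfib : ∑ x ∈ B, G p j x
      = ∑ r ∈ Finset.range p, ∑ x ∈ B.filter (fun x => x % p = r), G p j x :=
    (Finset.sum_fiberwise_of_maps_to
      (fun x _ => Finset.mem_range.mpr (Nat.mod_lt x hp)) _).symm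
  rw [hfib]
  have hterm : ∀ r ∈ Finset.range p,
      ∑ x ∈ B.filter (fun x => x % p = r), G p j x
        = (∑ t ∈ Finset.range ((B.filter (fun x => x % p = r)).card), t)
          + (B.filter (fun x => x % p = r)).card * (if j.val < r then 1 else 0) := by
    intro r hrm
    have hr := Finset.mem_range.mp hrm
    have hrun := runner_eq p hp B hdc r hr
    have hfinj : ∀ x ∈ Finset.range ((B.filter (fun x => x % p = r)).card),
        ∀ y ∈ Finset.range ((B.filter (fun x => x % p = r)).card),
          r + x * p = r + y * p → x = y := by
      intro x _ y _ hxy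
      have : x * p = y * p := by omega
      exact Nat.eq_of_mul_eq_mul_right hp this
    calc ∑ x ∈ B.filter (fun x => x % p = r), G p j x
        = ∑ t ∈ Finset.range ((B.filter (fun x => x % p = r)).card),
            G p j (r + t * p) := by
          conv_lhs => rw [hrun]
          exact Finset.sum_image hfinj
      _ = ∑ t ∈ Finset.range ((B.filter (fun x => x % p = r)).card),
            (t + if j.val < r then 1 else 0) := by
          exact Finset.sum_congr rfl (fun t _ => G_val p hp j r hr t)
      _ = _ := by
          rw [Finset.sum_add_distrib, Finset.sum_const, Finset.card_range, smul_eq_mul]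
  rw [Finset.sum_congr rfl hterm, Finset.sum_add_distrib]
  congr 1
  have hsplit : ∀ r ∈ Finset.range p,
      (B.filter (fun x => x % p = r)).card * (if j.val < r then 1 else 0)
        = if j.val < r then (B.filter (fun x => x % p = r)).card else 0 := by
    intro r _
    split_ifs <;> omega
  rw [Finset.sum_congr rfl hsplit, ← Finset.sum_filter]
  congr 1
  ext r
  simp only [Finset.mem_filter, Finset.mem_range, Finset.mem_Ico]
  omega

lemma fiber_card_sum (p : ℕ) (hp : 0 < p) (B : Finset ℕ) :
    ∑ r ∈ Finset.range p, (B.filter (fun x => x % p = r)).card = B.card := by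
  classical
  exact (Finset.card_eq_sum_card_fiberwise
    (fun x _ => Finset.mem_range.mpr (Nat.mod_lt x hp))).symm
lemma core_eq (p : ℕ) (hp : 0 < p) (nu1 nu2 : YoungDiagram)
    (h1 : IsCore p nu1) (h2 : IsCore p nu2) (a b : ℕ)
    (heq : ∀ i : ZMod p, mBox p i nu1 + a = mBox p i nu2 + b) :
    nu1 = nu2 := by
  classical
  obtain ⟨N, hNdef⟩ : ∃ N, N = max (nu1.colLen 0) (nu2.colLen 0) + 1 := ⟨_, rfl⟩
  have hN1 : nu1.colLen 0 < N := by omega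
  have hN2 : nu2.colLen 0 < N := by omega
  have hinj : ∀ (nu : YoungDiagram), ∀ x ∈ Finset.range N, ∀ y ∈ Finset.range N,
      bbeta nu N x = bbeta nu N y → x = y := by
    intro nu x hx y hy hxy
    rw [Finset.mem_range] at hx hy
    by_contra hne
    rcases Nat.lt_or_ge x y with h | h
    · have := bbeta_strictAnti nu N h hy; omega
    · have := bbeta_strictAnti nu N (show y < x by omega) hx; omega
  have hdc : ∀ (nu : YoungDiagram), nu.colLen 0 < N → IsCore p nu →
      ∀ x ∈ (Finset.range N).image (bbeta nu N), p ≤ x →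
        x - p ∈ (Finset.range N).image (bbeta nu N) := by
    intro nu hNn hcore x hx hpx
    rw [Finset.mem_image] at hx
    obtain ⟨k, hk, rfl⟩ := hx
    by_contra hcon
    refine hcore (not_core_of_gap p hp nu N hNn k (Finset.mem_range.mp hk) hpx ?_)
    intro k' hk' hne
    exact hcon (Finset.mem_image.mpr ⟨k', Finset.mem_range.mpr hk', hne⟩)
  have hdc1 := hdc nu1 hN1 h1
  have hdc2 := hdc nu2 hN2 h2
  have hsum : ∀ j : ZMod p,
      (∑ x ∈ (Finset.range N).image (bbeta nu1 N), G p j x) + a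
        = (∑ x ∈ (Finset.range N).image (bbeta nu2 N), G p j x) + b := by
    intro j
    have hi := heq (j - ((N - 1 : ℕ) : ZMod p))
    have hf1 := mBox_formula p hp nu1 N hN1 (j - ((N - 1 : ℕ) : ZMod p))
    have hf2 := mBox_formula p hp nu2 N hN2 (j - ((N - 1 : ℕ) : ZMod p))
    rw [sub_add_cancel] at hf1 hf2
    rw [Finset.sum_image (hinj nu1), Finset.sum_image (hinj nu2)]
    omega
  have hcs : ∀ v, v < p →
      (∑ r ∈ Finset.range p, ∑ t ∈ Finset.range
          ((((Finset.range N).image (bbeta nu1 N)).filter (fun x => x % p = r)).card), t)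
        + (∑ r ∈ Finset.Ico (v + 1) p,
            (((Finset.range N).image (bbeta nu1 N)).filter (fun x => x % p = r)).card) + a
      = (∑ r ∈ Finset.range p, ∑ t ∈ Finset.range
          ((((Finset.range N).image (bbeta nu2 N)).filter (fun x => x % p = r)).card), t)
        + (∑ r ∈ Finset.Ico (v + 1) p,
            (((Finset.range N).image (bbeta nu2 N)).filter (fun x => x % p = r)).card) + b := by
    intro v hv
    have hs := hsum ((v : ℕ) : ZMod p)
    rw [core_sum p hp _ hdc1, core_sum p hp _ hdc2, ZMod.val_cast_of_lt hv] at hs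
    omega
  have hK := hcs (p - 1) (by omega)
  rw [show p - 1 + 1 = p by omega] at hK
  simp only [Finset.Ico_self, Finset.sum_empty] at hK
  have hT : ∀ v, v < p →
      (∑ r ∈ Finset.Ico (v + 1) p,
          (((Finset.range N).image (bbeta nu1 N)).filter (fun x => x % p = r)).card)
        = ∑ r ∈ Finset.Ico (v + 1) p,
            (((Finset.range N).image (bbeta nu2 N)).filter (fun x => x % p = r)).card := by
    intro v hv
    have hv2 := hcs v hv
    omega
  have hcard : ∀ (nu : YoungDiagram), ((Finset.range N).image (bbeta nu N)).card = N := by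
    intro nu
    rw [Finset.card_image_of_injOn (fun x hx y hy hxy =>
      hinj nu x (by exact_mod_cast hx) y (by exact_mod_cast hy) hxy), Finset.card_range]
  have htot : ∀ (nu : YoungDiagram),
      ∑ r ∈ Finset.range p,
          (((Finset.range N).image (bbeta nu N)).filter (fun x => x % p = r)).card = N := by
    intro nu
    rw [fiber_card_sum p hp _, hcard nu]
  have ht : ∀ r, r < p →
      (((Finset.range N).image (bbeta nu1 N)).filter (fun x => x % p = r)).card
        = (((Finset.range N).image (bbeta nu2 N)).filter (fun x => x % p = r)).card := by
    intro r hr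
    rcases Nat.eq_zero_or_pos r with rfl | hr0
    · have hT0 := hT 0 hp
      have e1 : ∀ (g : ℕ → ℕ), ∑ x ∈ Finset.range p, g x
          = g 0 + ∑ x ∈ Finset.Ico (0 + 1) p, g x := by
        intro g
        rw [Finset.range_eq_Ico]
        exact Finset.sum_eq_sum_Ico_succ_bot hp g
      have et1 := htot nu1
      have et2 := htot nu2
      rw [e1] at et1 et2
      omega
    · have hT1 := hT (r - 1) (by omega)
      have hT2 := hT r hr
      have e1 : ∀ (g : ℕ → ℕ), ∑ x ∈ Finset.Ico (r - 1 + 1) p, g x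
          = g r + ∑ x ∈ Finset.Ico (r + 1) p, g x := by
        intro g
        rw [show r - 1 + 1 = r by omega]
        exact Finset.sum_eq_sum_Ico_succ_bot hr g
      rw [e1, e1] at hT1
      omega
  have hkey : ∀ (BA BB : Finset ℕ), (∀ x ∈ BA, p ≤ x → x - p ∈ BA) →
      (∀ x ∈ BB, p ≤ x → x - p ∈ BB) →
      (∀ r, r < p → (BA.filter (fun x => x % p = r)).card
        = (BB.filter (fun x => x % p = r)).card) →
      BA ⊆ BB := by
    intro BA BB hA hB hts x hx
    have hr : x % p < p := Nat.mod_lt x hp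
    have hx1 : x ∈ BA.filter (fun y => y % p = x % p) := Finset.mem_filter.mpr ⟨hx, rfl⟩
    rw [runner_eq p hp BA hA (x % p) hr, hts (x % p) hr,
      ← runner_eq p hp BB hB (x % p) hr] at hx1
    exact (Finset.mem_filter.mp hx1).1
  have hBeq : (Finset.range N).image (bbeta nu1 N) = (Finset.range N).image (bbeta nu2 N) :=
    Finset.Subset.antisymm (hkey _ _ hdc1 hdc2 ht)
      (hkey _ _ hdc2 hdc1 (fun r hr => (ht r hr).symm))
  have hfiltercard : ∀ (nu : YoungDiagram), ∀ kk, kk < N →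
      (((Finset.range N).image (bbeta nu N)).filter (fun x => bbeta nu N kk < x)).card
        = kk := by
    intro nu kk hkk
    have hrf : (Finset.range N).filter (fun k' => bbeta nu N kk < bbeta nu N k')
        = Finset.range kk := by
      ext k'
      simp only [Finset.mem_filter, Finset.mem_range]
      constructor
      · rintro ⟨hk', h2⟩
        by_contra hcon
        rcases Nat.eq_or_lt_of_le (show kk ≤ k' by omega) with he | hlt
        · rw [he] at h2; exact lt_irrefl _ h2
        · have := bbeta_strictAnti nu N hlt hk'; omega
      · intro h
        exact ⟨by omega, bbeta_strictAnti nu N h hkk⟩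
    rw [Finset.filter_image, hrf, Finset.card_image_of_injOn (fun x hx y hy hxy =>
      hinj nu x (by
        rw [Finset.mem_coe, Finset.mem_range] at hx
        exact Finset.mem_range.mpr (by omega)) y (by
        rw [Finset.mem_coe, Finset.mem_range] at hy
        exact Finset.mem_range.mpr (by omega)) hxy), Finset.card_range]
  have hbetaeq : ∀ kk, kk < N → bbeta nu1 N kk = bbeta nu2 N kk := by
    intro kk hkk
    have hm1 : bbeta nu1 N kk ∈ (Finset.range N).image (bbeta nu1 N) :=
      Finset.mem_image_of_mem _ (Finset.mem_range.mpr hkk)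
    have hm2 : bbeta nu2 N kk ∈ (Finset.range N).image (bbeta nu1 N) := by
      rw [hBeq]; exact Finset.mem_image_of_mem _ (Finset.mem_range.mpr hkk)
    have hc1 := hfiltercard nu1 kk hkk
    have hc2 := hfiltercard nu2 kk hkk
    rw [← hBeq] at hc2
    by_contra hne
    have key : ∀ x y : ℕ, x ∈ (Finset.range N).image (bbeta nu1 N) →
        y ∈ (Finset.range N).image (bbeta nu1 N) →
        (((Finset.range N).image (bbeta nu1 N)).filter (fun z => x < z)).card
          = (((Finset.range N).image (bbeta nu1 N)).filter (fun z => y < z)).card →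
        x < y → False := by
      intro x y hxB hyB hcc hxy
      have hsub : ((Finset.range N).image (bbeta nu1 N)).filter (fun z => y < z)
          ⊆ ((Finset.range N).image (bbeta nu1 N)).filter (fun z => x < z) := by
        intro z hz
        rw [Finset.mem_filter] at hz ⊢
        exact ⟨hz.1, by omega⟩
      have hy1 : y ∈ ((Finset.range N).image (bbeta nu1 N)).filter (fun z => x < z) :=
        Finset.mem_filter.mpr ⟨hyB, hxy⟩
      have hy2 : y ∉ ((Finset.range N).image (bbeta nu1 N)).filter (fun z => y < z) := by
        simp [Finset.mem_filter]
      have := Finset.card_lt_card ((Finset.ssubset_iff_of_subset hsub).mpr ⟨y, hy1, hy2⟩)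
      omega
    rcases Nat.lt_or_ge (bbeta nu1 N kk) (bbeta nu2 N kk) with h | h
    · exact key _ _ hm1 hm2 (hc1.trans hc2.symm) h
    · exact key _ _ hm2 hm1 (hc2.trans hc1.symm) (by omega)
  have hrow : ∀ kk, nu1.rowLen kk = nu2.rowLen kk := by
    intro kk
    rcases Nat.lt_or_ge kk N with h | h
    · have := hbetaeq kk h
      unfold bbeta at this
      omega
    · rw [rowLen_eq_zero' nu1 (by omega), rowLen_eq_zero' nu2 (by omega)]
  apply YoungDiagram.ext
  ext c
  obtain ⟨x, yy⟩ := c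
  rw [YoungDiagram.mem_cells, YoungDiagram.mem_cells, YoungDiagram.mem_iff_lt_rowLen,
    YoungDiagram.mem_iff_lt_rowLen, hrow]


/-- two partitions `λ, μ` of the same integer `d` have the same `p`-core if
and only if for every residue `i ∈ ℤ/pℤ` they have the same number of boxes of content
`≡ i (mod p)`.  ("Same `p`-core" is expressed as the existence of a common `p`-core
reachable from both by successively removing rim `p`-hooks; this is equivalent to
equality of `p`-cores since the `p`-core is independent of the removal order.) -/
theorem same_core_iff_same_content_multiset (p d : ℕ) (hp : 0 < p)
    (lam mu : YoungDiagram)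
    (hlam : lam.cells.card = d) (hmu : mu.cells.card = d) :
    (∃ nu : YoungDiagram, IsCore p nu ∧
        Relation.ReflTransGen (RimHook p) lam nu ∧
        Relation.ReflTransGen (RimHook p) mu nu)
      ↔ ∀ i : ZMod p, mBox p i lam = mBox p i mu := by
  constructor
  · rintro ⟨nu, hcore, hl, hm⟩
    obtain ⟨n1, hcc1, hm1⟩ := rtg_mBox p hp hl
    obtain ⟨n2, hcc2, hm2⟩ := rtg_mBox p hp hm
    have hn : n1 = n2 := by
      rw [hlam] at hcc1; rw [hmu] at hcc2
      have : n1 * p = n2 * p := by omega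
      exact Nat.eq_of_mul_eq_mul_right hp this
    intro i
    rw [hm1 i, hm2 i, hn]
  · intro h
    obtain ⟨nu1, hcore1, hr1⟩ := exists_core p hp lam
    obtain ⟨nu2, hcore2, hr2⟩ := exists_core p hp mu
    obtain ⟨n1, hcc1, hm1⟩ := rtg_mBox p hp hr1
    obtain ⟨n2, hcc2, hm2⟩ := rtg_mBox p hp hr2
    have heq : ∀ i : ZMod p, mBox p i nu1 + n1 = mBox p i nu2 + n2 := by
      intro i
      have hh := h i
      rw [hm1 i, hm2 i] at hh
      omega
    have hne := core_eq p hp nu1 nu2 hcore1 hcore2 n1 n2 heq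
    subst hne
    exact ⟨nu1, hcore1, hr1, hr2⟩
end Stmt17
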